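/- Let R be a commutative Noetherian ring and M a finitely generated R-module. Then M is reflexive (i.e. the canonical evaluation map ev_M : M → Hom_R(Hom_R(M,R),R) is bijective) if and only if M is isomorphic as an R-module to its double dual Hom_R(Hom_R(M,R),R) (by some, not necessarily the canonical, isomorphism). -/
import Mathlib


/-- Over a commutative Noetherian ring, a finitely generated module `M` is reflexive
(the canonical evaluation map `M → M**` is bijective) if and only if `M` is isomorphic,
by some possibly non-canonical isomorphism, to its double dual. -/
theorem stmt_0 (R : Type*) [CommRing R] [IsNoetherianRing R]
    (M : Type*) [AddCommGroup M] [Module R M] [Module.Finite R M] :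
    Function.Bijective (Module.Dual.eval R M) ↔
      Nonempty (M ≃ₗ[R] Module.Dual R (Module.Dual R M)) := by
  constructor
  · intro h
    exact ⟨LinearEquiv.ofBijective _ h⟩
  · rintro ⟨φ⟩
    -- `Dual R M` is a finite module
    obtain ⟨n, π, hπ⟩ := Module.Finite.exists_fin' R M
    have hfin : Module.Finite R (Module.Dual R M) := by
      have hNoeth : IsNoetherian R (Module.Dual R M) :=
        isNoetherian_of_injective π.dualMap (π.dualMap_injective_of_surjective hπ)
      exact Module.finite_def.mpr (IsNoetherian.noetherian ⊤)
    -- the split: `s ∘ eval_{M*} = id`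
    set s : Module.Dual R (Module.Dual R (Module.Dual R M)) →ₗ[R] Module.Dual R M :=
      (Module.Dual.eval R M).dualMap with hs_def
    have hsplit : ∀ g : Module.Dual R M,
        s (Module.Dual.eval R (Module.Dual R M) g) = g := fun g => rfl
    -- `s` is surjective
    have hssurj : Function.Surjective s := fun g => ⟨_, hsplit g⟩
    -- use the iso `ψ : M* ≃ M***` from `φ`
    let ψ : Module.Dual R (Module.Dual R (Module.Dual R M)) ≃ₗ[R] Module.Dual R M :=
      φ.dualMap
    -- surjective endomorphism of the f.g. module `M*`, hence injective
    have hendo : Function.Surjective (s ∘ₗ ψ.symm.toLinearMap) :=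
      hssurj.comp ψ.symm.surjective
    have hinj : Function.Injective (s ∘ₗ ψ.symm.toLinearMap) :=
      OrzechProperty.injective_of_surjective_endomorphism _ hendo
    have hsinj : Function.Injective s := by
      intro x y hxy
      have := hinj (a₁ := ψ x) (a₂ := ψ y) (by
        simp only [LinearMap.coe_comp, LinearEquiv.coe_coe, Function.comp_apply,
          LinearEquiv.symm_apply_apply]
        exact hxy)
      exact ψ.injective this
    -- hence `eval_{M*}` is bijective, i.e. `Dual R M` is reflexive
    have heval : Function.Bijective (Module.Dual.eval R (Module.Dual R M)) := by
      constructor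
      · intro x y hxy
        have := congrArg s hxy
        rwa [hsplit, hsplit] at this
      · intro t
        refine ⟨s t, hsinj ?_⟩
        rw [hsplit]
    have hrefl : Module.IsReflexive R (Module.Dual R M) := ⟨heval⟩
    have hrefl2 : Module.IsReflexive R (Module.Dual R (Module.Dual R M)) :=
      Module.Dual.instIsReflecive R (Module.Dual R M)
    have : Module.IsReflexive R M := Module.equiv φ.symm
    exact Module.bijective_dual_eval R M
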